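/- The random integrals ∫_{‖h‖ ≥ a_n} exp( −(1/2)(h − U_n)ᵀ V (h − U_n) ) dh converge to 0 in probability as n → ∞. -/

import Mathlib

open MeasureTheory ProbabilityTheory Filter BoundedContinuousFunction
open scoped Topology ENNReal BigOperators

private theorem stmt11_quad_lb {d : ℕ} (V : Matrix (Fin d) (Fin d) ℝ) (hV : V.PosDef) :
    ∃ c : ℝ, 0 < c ∧ ∀ x : EuclideanSpace ℝ (Fin d),
      c * ‖x‖ ^ 2 ≤ ∑ i, ∑ j, x i * V i j * x j := by
  set Q : EuclideanSpace ℝ (Fin d) → ℝ := fun x => ∑ i, ∑ j, x i * V i j * x j with hQ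
  have hQpos : ∀ x : EuclideanSpace ℝ (Fin d), x ≠ 0 → 0 < Q x := by
    intro x hx
    have := hV.dotProduct_mulVec_pos (x := x.ofLp) (fun h => hx (by ext i; exact congrFun h i))
    simpa [dotProduct, Matrix.mulVec, Finset.mul_sum, mul_assoc, Q] using this
  have hQcont : Continuous Q := by
    apply continuous_finset_sum _ fun i _ => continuous_finset_sum _ fun j _ => ?_
    exact (((EuclideanSpace.proj i).continuous.mul continuous_const).mul
      (EuclideanSpace.proj j).continuous)
  have hQhom : ∀ (t : ℝ) (x : EuclideanSpace ℝ (Fin d)), Q (t • x) = t ^ 2 * Q x := by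
    intro t x
    simp only [Q, Finset.mul_sum]
    refine Finset.sum_congr rfl fun i _ => Finset.sum_congr rfl fun j _ => ?_
    simp only [PiLp.smul_apply, smul_eq_mul]
    ring
  rcases Nat.eq_zero_or_pos d with hd | hd
  · refine ⟨1, one_pos, fun x => ?_⟩
    subst hd
    have hx : x = 0 := Subsingleton.elim x 0
    simp [hx, Q]
  · haveI : Nontrivial (EuclideanSpace ℝ (Fin d)) := by
      refine ⟨EuclideanSpace.single ⟨0, hd⟩ (1:ℝ), 0, fun h => ?_⟩
      have := congrArg norm h
      simp [EuclideanSpace.norm_single] at this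
    have hne : (Metric.sphere (0 : EuclideanSpace ℝ (Fin d)) 1).Nonempty := by
      apply NormedSpace.sphere_nonempty.2
      norm_num
    obtain ⟨x₀, hx₀S, hx₀min⟩ :=
      (isCompact_sphere (0 : EuclideanSpace ℝ (Fin d)) 1).exists_isMinOn hne
        (hQcont.continuousOn)
    have hx₀norm : ‖x₀‖ = 1 := by simpa using mem_sphere_zero_iff_norm.1 hx₀S
    have hx₀ne : x₀ ≠ 0 := by intro h; rw [h] at hx₀norm; simp at hx₀norm
    refine ⟨Q x₀, hQpos x₀ hx₀ne, fun x => ?_⟩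
    rcases eq_or_ne x 0 with rfl | hx
    · simp [Q]
    · have hxn : (0:ℝ) < ‖x‖ := norm_pos_iff.2 hx
      have hmem : ‖x‖⁻¹ • x ∈ Metric.sphere (0 : EuclideanSpace ℝ (Fin d)) 1 := by
        simp [norm_smul, abs_of_pos (inv_pos.2 hxn), inv_mul_cancel₀ hxn.ne']
      have := hx₀min hmem
      have h2 : Q x₀ ≤ ‖x‖⁻¹ ^ 2 * Q x := by simpa [hQhom] using this
      have := mul_le_mul_of_nonneg_left h2 (sq_nonneg ‖x‖)
      calc Q x₀ * ‖x‖ ^ 2 = ‖x‖ ^ 2 * Q x₀ := by ring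
        _ ≤ ‖x‖ ^ 2 * (‖x‖⁻¹ ^ 2 * Q x) := this
        _ = Q x := by field_simp

private theorem stmt11_quad_cont {d : ℕ} (V : Matrix (Fin d) (Fin d) ℝ) :
    Continuous (fun x : EuclideanSpace ℝ (Fin d) => ∑ i, ∑ j, x i * V i j * x j) := by
  apply continuous_finset_sum _ fun i _ => continuous_finset_sum _ fun j _ => ?_
  exact (((EuclideanSpace.proj i).continuous.mul continuous_const).mul
    (EuclideanSpace.proj j).continuous)

private theorem stmt11_gauss_int {d : ℕ} {b : ℝ} (hb : 0 < b) :
    Integrable (fun v : EuclideanSpace ℝ (Fin d) => Real.exp (-b * ‖v‖ ^ 2)) := by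
  have h := (GaussianFourier.integrable_cexp_neg_mul_sq_norm_add
      (V := EuclideanSpace ℝ (Fin d)) (b := (b:ℂ)) (by simpa using hb) 0 0).norm
  refine h.congr (Filter.Eventually.of_forall fun v => ?_)
  simp only [Complex.norm_exp, zero_mul, add_zero]
  norm_cast

private theorem stmt11_tail_tendsto {E : Type*} [NormedAddCommGroup E] [MeasurableSpace E]
    [OpensMeasurableSpace E] {μ : Measure E} {G : E → ℝ}
    (hGi : Integrable G μ) (hGnn : ∀ x, 0 ≤ G x) :
    Tendsto (fun r : ℝ => ∫ h in {h : E | r ≤ ‖h‖}, G h ∂μ) atTop (𝓝 0) := by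
  have hms : ∀ r : ℝ, MeasurableSet {h : E | r ≤ ‖h‖} := fun r =>
    measurableSet_le measurable_const measurable_norm
  have key : Tendsto (fun r : ℝ => ∫ h, ({h : E | r ≤ ‖h‖}).indicator G h ∂μ)
      atTop (𝓝 (∫ _h, (0:ℝ) ∂μ)) := by
    apply tendsto_integral_filter_of_dominated_convergence G
    · exact Eventually.of_forall fun r => (hGi.1.indicator (hms r))
    · exact Eventually.of_forall fun r => ae_of_all _ fun x => by
        rw [Real.norm_eq_abs, abs_of_nonneg (Set.indicator_nonneg (fun y _ => hGnn y) x)]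
        exact Set.indicator_le_self' (fun y _ => hGnn y) x
    · exact hGi
    · refine ae_of_all _ fun x => ?_
      have : ∀ᶠ r in atTop, ({h : E | r ≤ ‖h‖}).indicator G x = 0 := by
        filter_upwards [eventually_gt_atTop ‖x‖] with r hr
        exact Set.indicator_of_notMem (by simp [not_le.2 hr]) _
      exact Tendsto.congr' (this.mono fun r h => h.symm) tendsto_const_nhds
  simpa [integral_indicator (hms _)] using key

private theorem stmt11_shift_bound {d : ℕ} {G : EuclideanSpace ℝ (Fin d) → ℝ}
    (hGi : Integrable G) (hGnn : ∀ x, 0 ≤ G x) (u : EuclideanSpace ℝ (Fin d)) (r : ℝ) :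
    (∫ h in {h : EuclideanSpace ℝ (Fin d) | r ≤ ‖h‖}, G (h - u)) ≤
      ∫ h in {h : EuclideanSpace ℝ (Fin d) | r - ‖u‖ ≤ ‖h‖}, G h := by
  have hms : ∀ s : ℝ, MeasurableSet {h : EuclideanSpace ℝ (Fin d) | s ≤ ‖h‖} := fun s =>
    measurableSet_le measurable_const measurable_norm
  rw [← integral_indicator (hms r), ← integral_indicator (hms (r - ‖u‖))]
  have step : (∫ h, ({h : EuclideanSpace ℝ (Fin d) | r ≤ ‖h‖}).indicator
      (fun h => G (h - u)) h) = ∫ h, ({h : EuclideanSpace ℝ (Fin d) | r ≤ ‖h‖}).indicator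
      (fun h => G (h - u)) (h + u) := (integral_add_right_eq_self _ u).symm
  rw [step]
  have heq : ∀ h : EuclideanSpace ℝ (Fin d),
      ({h : EuclideanSpace ℝ (Fin d) | r ≤ ‖h‖}).indicator (fun h => G (h - u)) (h + u)
        = ({h : EuclideanSpace ℝ (Fin d) | r ≤ ‖h + u‖}).indicator G h := by
    intro h
    simp only [Set.indicator_apply, Set.mem_setOf_eq, add_sub_cancel_right]
  simp_rw [heq]
  apply integral_mono
  · have : MeasurableSet {h : EuclideanSpace ℝ (Fin d) | r ≤ ‖h + u‖} :=
      measurableSet_le measurable_const (measurable_norm.comp (measurable_id.add_const u))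
    exact (hGi.indicator this)
  · exact hGi.indicator (hms _)
  · intro x
    simp only [Set.indicator_apply, Set.mem_setOf_eq]
    by_cases hmem : r ≤ ‖x + u‖
    · have h2 : r - ‖u‖ ≤ ‖x‖ := by have := norm_add_le x u; linarith
      simp only [if_pos hmem, if_pos h2, le_refl]
    · simp only [if_neg hmem]
      split_ifs
      · exact hGnn x
      · exact le_refl 0

/-- If the random vectors `U n` converge weakly to `U·Z` with `Z` a standard
Gaussian vector and `U` an invertible matrix, `V` is symmetric positive definite, and `a n → ∞`,
then the random integrals `∫_{‖h‖ ≥ a n} exp(-(1/2)(h - U n)ᵀ V (h - U n)) dh` converge to `0`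
in probability. -/
theorem stmt_11 {d : ℕ} {Ω : Type*} [MeasureSpace Ω] [IsProbabilityMeasure (ℙ : Measure Ω)]
    (U : ℕ → Ω → EuclideanSpace ℝ (Fin d))
    (Umat : Matrix (Fin d) (Fin d) ℝ) (hUmat : IsUnit Umat.det)
    (hweak : ∀ f : EuclideanSpace ℝ (Fin d) →ᵇ ℝ,
      Tendsto (fun m => ∫ ω, f (U m ω) ∂ℙ) atTop
        (𝓝 (∫ z : Fin d → ℝ, f ((EuclideanSpace.equiv (Fin d) ℝ).symm (Umat.mulVec z))
            ∂(Measure.pi fun _ => gaussianReal 0 1))))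
    (V : Matrix (Fin d) (Fin d) ℝ) (hV : V.PosDef)
    (a : ℕ → ℝ) (ha_pos : ∀ m, 0 < a m) (ha : Tendsto a atTop atTop) :
    ∀ ε : ℝ, 0 < ε →
      Tendsto (fun m => ℙ {ω | ε ≤ ∫ h in {h : EuclideanSpace ℝ (Fin d) | a m ≤ ‖h‖},
          Real.exp (-(1 / 2) * ∑ i, ∑ j, (h - U m ω) i * V i j * (h - U m ω) j)})
        atTop (𝓝 0) := by
  intro ε hε
  classical
  obtain ⟨c, hc, hcQ⟩ := stmt11_quad_lb V hV
  set G : EuclideanSpace ℝ (Fin d) → ℝ :=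
    fun k => Real.exp (-(1 / 2) * ∑ i, ∑ j, k i * V i j * k j) with hGdef
  have hGnn : ∀ k, 0 ≤ G k := fun k => (Real.exp_pos _).le
  have hGcont : Continuous G :=
    Real.continuous_exp.comp (continuous_const.mul (stmt11_quad_cont V))
  have hGint : Integrable G := by
    refine (stmt11_gauss_int (d := d) (b := c / 2) (by linarith)).mono
      hGcont.aestronglyMeasurable (ae_of_all _ fun k => ?_)
    rw [Real.norm_eq_abs, Real.norm_eq_abs, abs_of_nonneg (hGnn k),
      abs_of_nonneg (Real.exp_pos _).le]
    apply Real.exp_le_exp.2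
    have := hcQ k
    nlinarith [sq_nonneg ‖k‖]
  -- the tail of the integral of G tends to 0
  have htail : Tendsto (fun r : ℝ => ∫ h in {h : EuclideanSpace ℝ (Fin d) | r ≤ ‖h‖}, G h)
      atTop (𝓝 0) := stmt11_tail_tendsto hGint hGnn
  have hhalf : Tendsto (fun m => a m / 2) atTop atTop := ha.atTop_div_const two_pos
  rw [ENNReal.tendsto_nhds_zero]
  intro δ hδ
  obtain ⟨t, ht0, htδ⟩ : ∃ t : ℝ, 0 < t ∧ ENNReal.ofReal (3 * t) ≤ δ := by
    rcases eq_or_ne δ ⊤ with rfl | hδtop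
    · exact ⟨1, one_pos, le_top⟩
    · have h0 : 0 < δ.toReal := ENNReal.toReal_pos hδ.ne' hδtop
      refine ⟨δ.toReal / 4, by linarith, ?_⟩
      refine ENNReal.ofReal_le_of_le_toReal ?_
      linarith
  -- pick a radius N with small Gaussian tail
  set γ : Measure (Fin d → ℝ) := Measure.pi fun _ => gaussianReal 0 1 with hγdef
  haveI : IsProbabilityMeasure γ := by infer_instance
  set φ : (Fin d → ℝ) → EuclideanSpace ℝ (Fin d) :=
    fun z => (EuclideanSpace.equiv (Fin d) ℝ).symm (Umat.mulVec z) with hφdef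
  have hφc : Continuous φ := by
    have h1 : Continuous fun z : Fin d → ℝ => Umat.mulVec z :=
      LinearMap.continuous_of_finiteDimensional (Matrix.mulVecLin Umat)
    exact (EuclideanSpace.equiv (Fin d) ℝ).symm.continuous.comp h1
  have hBtend : Tendsto (fun n : ℕ => γ {z | (n : ℝ) ≤ ‖φ z‖}) atTop (𝓝 0) := by
    have hms : ∀ n : ℕ, NullMeasurableSet {z | (n : ℝ) ≤ ‖φ z‖} γ := fun n =>
      (measurableSet_le measurable_const (hφc.norm.measurable)).nullMeasurableSet
    have hanti : Antitone fun n : ℕ => {z | (n : ℝ) ≤ ‖φ z‖} := by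
      intro n m hnm z hz
      simp only [Set.mem_setOf_eq] at hz ⊢
      exact le_trans (Nat.cast_le.2 hnm) hz
    have h0 : (⋂ n : ℕ, {z | (n : ℝ) ≤ ‖φ z‖}) = ∅ := by
      ext z
      simp only [Set.mem_iInter, Set.mem_setOf_eq, Set.mem_empty_iff_false, iff_false, not_forall]
      obtain ⟨n, hn⟩ := exists_nat_gt ‖φ z‖
      exact ⟨n, not_le.2 hn⟩
    have := tendsto_measure_iInter_atTop hms hanti ⟨0, measure_ne_top _ _⟩
    rw [h0] at this
    simpa [Function.comp_def] using this
  obtain ⟨N, hN⟩ : ∃ N : ℕ, γ {z | (N : ℝ) ≤ ‖φ z‖} < ENNReal.ofReal t :=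
    (hBtend.eventually_lt_const (by simp [ht0])).exists
  -- the bounded continuous test function
  set F0 : EuclideanSpace ℝ (Fin d) → ℝ := fun x => min 1 (max (‖x‖ - N) 0) + t with hF0def
  have hF0c : Continuous F0 := by
    exact ((continuous_const.min ((continuous_norm.sub continuous_const).max
      continuous_const)).add continuous_const)
  have hF0nn : ∀ x, 0 ≤ F0 x := by
    intro x
    have : (0:ℝ) ≤ min 1 (max (‖x‖ - N) 0) := le_min one_pos.le (le_max_right _ _)
    simp only [hF0def]; linarith
  have hF0le : ∀ x, F0 x ≤ 1 + t := by
    intro x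
    have : min 1 (max (‖x‖ - N) 0) ≤ 1 := min_le_left _ _
    simp only [hF0def]; linarith
  set F : EuclideanSpace ℝ (Fin d) →ᵇ ℝ :=
    BoundedContinuousFunction.ofNormedAddCommGroup F0 hF0c (1 + t)
      (fun x => by rw [Real.norm_eq_abs, abs_of_nonneg (hF0nn x)]; exact hF0le x) with hFdef
  have hFcoe : ∀ x, F x = F0 x := fun x => rfl
  -- the limit value is between t and 2t
  set L : ℝ := ∫ z, F (φ z) ∂γ with hLdef
  have hint1 : Integrable (fun z => F (φ z)) γ :=
    (F.compContinuous ⟨φ, hφc⟩).integrable γ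
  have hL2 : L ≤ 2 * t := by
    have hle : ∀ z, F (φ z) ≤ ({z | (N : ℝ) ≤ ‖φ z‖}).indicator (fun _ => (1:ℝ)) z + t := by
      intro z
      rw [hFcoe]
      simp only [Set.indicator_apply, Set.mem_setOf_eq]
      by_cases hz : (N : ℝ) ≤ ‖φ z‖
      · rw [if_pos hz]
        have : min 1 (max (‖φ z‖ - N) 0) ≤ 1 := min_le_left _ _
        simp only [hF0def]; linarith
      · rw [if_neg hz]
        have h1 : ‖φ z‖ - N < 0 := by push_neg at hz; linarith
        have h2 : max (‖φ z‖ - ↑N) 0 = 0 := max_eq_right h1.le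
        have h3 : min 1 (max (‖φ z‖ - ↑N) 0) ≤ 0 := by rw [h2]; exact min_le_right _ _
        simp only [hF0def]; linarith
    have hmeas : MeasurableSet {z | (N : ℝ) ≤ ‖φ z‖} :=
      measurableSet_le measurable_const hφc.norm.measurable
    have hint2 : Integrable (fun z => ({z | (N : ℝ) ≤ ‖φ z‖}).indicator
        (fun _ => (1:ℝ)) z + t) γ :=
      ((integrable_const (1:ℝ)).indicator hmeas).add (integrable_const t)
    have := integral_mono hint1 hint2 hle
    rw [hLdef]
    refine le_trans this ?_
    rw [integral_add ((integrable_const (1:ℝ)).indicator hmeas) (integrable_const t),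
      integral_indicator_const _ hmeas, integral_const]
    simp only [measureReal_def, measure_univ, ENNReal.toReal_one, smul_eq_mul, one_mul, mul_one]
    have : (γ {z | (N : ℝ) ≤ ‖φ z‖}).toReal ≤ t := by
      have := hN.le
      calc (γ {z | (N : ℝ) ≤ ‖φ z‖}).toReal ≤ (ENNReal.ofReal t).toReal :=
        ENNReal.toReal_mono ENNReal.ofReal_ne_top this
        _ = t := ENNReal.toReal_ofReal ht0.le
    linarith
  have hL1 : t ≤ L := by
    have hle : ∀ z, t ≤ F (φ z) := by
      intro z
      rw [hFcoe]
      have : (0:ℝ) ≤ min 1 (max (‖φ z‖ - N) 0) := le_min one_pos.le (le_max_right _ _)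
      simp only [hF0def]; linarith
    have := integral_mono (integrable_const t) hint1 hle
    simpa using this
  -- weak convergence applied to F
  have hwF := hweak F
  have hwFL : Tendsto (fun m => ∫ ω, F (U m ω) ∂ℙ) atTop (𝓝 L) := hwF
  have hev1 : ∀ᶠ m in atTop, (∫ ω, F (U m ω) ∂ℙ) < 3 * t :=
    hwFL.eventually_lt_const (by linarith)
  have hev2 : ∀ᶠ m in atTop, (0:ℝ) < ∫ ω, F (U m ω) ∂ℙ :=
    hwFL.eventually_const_lt (by linarith)
  have hev3 : ∀ᶠ m in atTop,
      (∫ h in {h : EuclideanSpace ℝ (Fin d) | a m / 2 ≤ ‖h‖}, G h) < ε :=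
    (htail.comp hhalf).eventually_lt_const hε
  have hev4 : ∀ᶠ m in atTop, (N : ℝ) + 1 ≤ a m / 2 := hhalf.eventually_ge_atTop _
  filter_upwards [hev1, hev2, hev3, hev4] with m h1 h2 h3 h4
  -- Markov inequality step
  have hFint : Integrable (fun ω => F (U m ω)) ℙ := by
    by_contra hni
    rw [integral_undef hni] at h2
    exact lt_irrefl _ h2
  have hmarkov := mul_meas_ge_le_integral_of_nonneg
    (ae_of_all _ fun ω => by rw [hFcoe]; exact hF0nn (U m ω)) hFint 1
  rw [one_mul] at hmarkov
  -- inclusion of events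
  have hsub : {ω | ε ≤ ∫ h in {h : EuclideanSpace ℝ (Fin d) | a m ≤ ‖h‖},
      Real.exp (-(1 / 2) * ∑ i, ∑ j, (h - U m ω) i * V i j * (h - U m ω) j)}
      ⊆ {ω | 1 ≤ F (U m ω)} := by
    intro ω hω
    have hω' : ε ≤ ∫ h in {h : EuclideanSpace ℝ (Fin d) | a m ≤ ‖h‖}, G (h - U m ω) := hω
    have hbig : a m / 2 ≤ ‖U m ω‖ := by
      by_contra hsmall
      push_neg at hsmall
      have hb1 : (∫ h in {h : EuclideanSpace ℝ (Fin d) | a m ≤ ‖h‖}, G (h - U m ω)) ≤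
          ∫ h in {h : EuclideanSpace ℝ (Fin d) | a m - ‖U m ω‖ ≤ ‖h‖}, G h :=
        stmt11_shift_bound hGint hGnn (U m ω) (a m)
      have hb2 : (∫ h in {h : EuclideanSpace ℝ (Fin d) | a m - ‖U m ω‖ ≤ ‖h‖}, G h) ≤
          ∫ h in {h : EuclideanSpace ℝ (Fin d) | a m / 2 ≤ ‖h‖}, G h := by
        apply setIntegral_mono_set
          (hGint.integrableOn)
          (ae_of_all _ fun x => hGnn x)
        refine HasSubset.Subset.eventuallyLE fun x hx => ?_
        simp only [Set.mem_setOf_eq] at hx ⊢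
        linarith
      linarith
    have hnorm : (N : ℝ) + 1 ≤ ‖U m ω‖ := le_trans h4 hbig
    show (1:ℝ) ≤ F (U m ω)
    rw [hFcoe]
    have hmax : (1:ℝ) ≤ max (‖U m ω‖ - N) 0 := le_max_of_le_left (by linarith)
    have hmin : (1:ℝ) ≤ min 1 (max (‖U m ω‖ - N) 0) := le_min le_rfl hmax
    simp only [hF0def]
    linarith
  calc ℙ {ω | ε ≤ ∫ h in {h : EuclideanSpace ℝ (Fin d) | a m ≤ ‖h‖},
        Real.exp (-(1 / 2) * ∑ i, ∑ j, (h - U m ω) i * V i j * (h - U m ω) j)}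
      ≤ ℙ {ω | 1 ≤ F (U m ω)} := measure_mono hsub
    _ = ENNReal.ofReal ((ℙ {ω | 1 ≤ F (U m ω)}).toReal) :=
        (ENNReal.ofReal_toReal (measure_ne_top _ _)).symm
    _ ≤ ENNReal.ofReal (∫ ω, F (U m ω) ∂ℙ) := ENNReal.ofReal_le_ofReal hmarkov
    _ ≤ ENNReal.ofReal (3 * t) := ENNReal.ofReal_le_ofReal h1.le
    _ ≤ δ := htδ
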